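/- Set C₁ = 2⁶. Let G be a finite abelian group, let 𝓑 be a regular Bourgain system in G of dimension d, and let μ : G → ℝ≥0 satisfy E_G μ = 1 and have support contained in B_ρ, where 0 < ρ ≤ 1/(C₁ d). Then ‖μ_B ∗ μ − μ_B‖_{L¹} ≤ C₁ ρ d. -/

import Mathlib

open Pointwise

universe u

/-- A Bourgain system of dimension `d` in an abelian group `G`. -/
def IsBourgainSystem {G : Type u} [AddCommGroup G] (B : ℝ → Set G) (d : ℝ) : Prop :=
  (∀ ρ : ℝ, 0 < ρ → (0 : G) ∈ B ρ) ∧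
  (∀ ρ : ℝ, 0 < ρ → -B ρ = B ρ) ∧
  (∀ ρ ρ' : ℝ, 0 < ρ → ρ ≤ ρ' → B ρ ⊆ B ρ') ∧
  (∀ ρ ρ' : ℝ, 0 < ρ → 0 < ρ' → B ρ + B ρ' ⊆ B (ρ + ρ')) ∧
  (∀ ρ : ℝ, 0 < ρ → ∃ X : Set G, (Nat.card X : ℝ) ≤ (2 : ℝ) ^ d ∧ B (2 * ρ) ⊆ X + B ρ)

/-- Regularity of a Bourgain system, with `C₀ = 2⁵ = 32`. -/
def IsRegularBS {G : Type u} [AddCommGroup G] (B : ℝ → Set G) (d : ℝ) : Prop :=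
  ∀ ρ : ℝ, |ρ| ≤ 1 / (32 * d) →
    1 - 32 * |ρ| * d ≤ (Nat.card (B (1 + ρ)) : ℝ) / (Nat.card (B 1) : ℝ) ∧
      (Nat.card (B (1 + ρ)) : ℝ) / (Nat.card (B 1) : ℝ) ≤ 1 + 32 * |ρ| * d

/-- The average `E_G f = |G|⁻¹ Σ_x f x`. -/
noncomputable def gavg {G : Type u} [AddCommGroup G] [Fintype G] (f : G → ℝ) : ℝ :=
  (Fintype.card G : ℝ)⁻¹ * ∑ x, f x

/-- Normalized convolution `(f ∗ g)(x) = E_y f(y) g(x − y)`. -/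
noncomputable def conv {G : Type u} [AddCommGroup G] [Fintype G] (f g : G → ℝ) : G → ℝ :=
  fun x => (Fintype.card G : ℝ)⁻¹ * ∑ y, f y * g (x - y)

/-- The normalized measure `μ_A = (|G|/|A|)·1_A` of a subset `A ⊆ G`. -/
noncomputable def muFn {G : Type u} [AddCommGroup G] [Fintype G] (A : Set G) : G → ℝ :=
  A.indicator fun _ => (Fintype.card G : ℝ) / (Nat.card A : ℝ)

/-- The `L¹` norm `‖f‖_{L¹} = E_G |f|`. -/
noncomputable def L1Norm {G : Type u} [AddCommGroup G] [Fintype G] (f : G → ℝ) : ℝ :=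
  gavg fun x => |f x|

lemma sum_ind {G : Type u} [Fintype G] (s : Set G) (c : ℝ) :
    ∑ x, s.indicator (fun _ => c) x = (Nat.card s : ℝ) * c := by
  classical
  have h : Finset.univ.filter (· ∈ s) = s.toFinite.toFinset := by
    ext a; simp [Set.Finite.mem_toFinset]
  rw [Finset.sum_indicator_eq_sum_filter, Finset.sum_const, h,
    Nat.card_eq_card_finite_toFinset s.toFinite, nsmul_eq_mul]

theorem statement9 {G : Type u} [AddCommGroup G] [Fintype G] (B : ℝ → Set G) (d : ℝ)
    (hB : IsBourgainSystem B d) (hreg : IsRegularBS B d)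
    (μ : G → ℝ) (hμ0 : ∀ x, 0 ≤ μ x) (hμ1 : gavg μ = 1)
    (ρ : ℝ) (hρ0 : 0 < ρ) (hρ1 : ρ ≤ 1 / (64 * d))
    (hsupp : ∀ x, μ x ≠ 0 → x ∈ B ρ) :
    L1Norm (fun x => conv (muFn (B 1)) μ x - muFn (B 1) x) ≤ 64 * ρ * d := by
  classical
  obtain ⟨hzero, hsymm, hmono, hadd, -⟩ := hB
  have hd : 0 < d := by
    by_contra h
    push_neg at h
    rcases lt_or_eq_of_le h with h' | h'
    · have : 1 / (64 * d) < 0 := div_neg_of_pos_of_neg one_pos (by linarith)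
      linarith
    · rw [h'] at hρ1; norm_num at hρ1; linarith
  set N : ℝ := (Fintype.card G : ℝ) with hNdef
  have hN : 0 < N := by
    have h0 : 0 < Fintype.card G := Fintype.card_pos_iff.mpr ⟨0⟩
    rw [hNdef]
    exact_mod_cast h0
  set n₁ : ℝ := (Nat.card (B 1) : ℝ) with hn1def
  set n₂ : ℝ := (Nat.card (B (1 + ρ)) : ℝ) with hn2def
  have hn1 : 0 < n₁ := by
    have : 0 < Nat.card (B 1) := by
      have : Nonempty (B 1) := ⟨0, hzero 1 one_pos⟩
      exact Nat.card_pos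
    rw [hn1def]
    exact_mod_cast this
  -- regularity bound
  have hρ32 : |ρ| ≤ 1 / (32 * d) := by
    rw [abs_of_pos hρ0]
    calc ρ ≤ 1 / (64 * d) := hρ1
    _ ≤ 1 / (32 * d) := by
      apply one_div_le_one_div_of_le (by positivity) (by linarith)
  have hreg' := (hreg ρ hρ32).2
  rw [abs_of_pos hρ0] at hreg'
  have hn2le : n₂ ≤ (1 + 32 * ρ * d) * n₁ := by
    rw [div_le_iff₀ hn1] at hreg'
    linarith
  set c : ℝ := N / n₁ with hcdef
  have hc : 0 ≤ c := by positivity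
  have hmu1 : muFn (B 1) = (B 1).indicator (fun _ => c) := rfl
  have hsub : B 1 ⊆ B (1 + ρ) := hmono 1 (1 + ρ) one_pos (by linarith)
  set g : G → ℝ := fun z => (B (1 + ρ)).indicator (fun _ => c) z - (B 1).indicator (fun _ => c) z
    with hgdef
  have hg0 : ∀ z, 0 ≤ g z := by
    intro z
    by_cases hz : z ∈ B 1
    · simp [hgdef, Set.indicator_of_mem hz, Set.indicator_of_mem (hsub hz)]
    · simp only [hgdef, Set.indicator_of_notMem hz, sub_zero]
      exact Set.indicator_nonneg (fun _ _ => hc) _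
  have sumg : ∑ z, g z = c * (n₂ - n₁) := by
    simp only [hgdef]
    rw [Finset.sum_sub_distrib, sum_ind, sum_ind]
    ring
  -- key per-y estimate
  have key : ∀ y ∈ B ρ, ∑ x, |muFn (B 1) (x - y) - muFn (B 1) x| ≤ 64 * ρ * d * N := by
    intro y hy
    have hpt : ∀ x, |muFn (B 1) (x - y) - muFn (B 1) x| ≤ g x + g (x - y) := by
      intro x
      rw [hmu1]
      by_cases h1 : x - y ∈ B 1 <;> by_cases h2 : x ∈ B 1
      · simp only [Set.indicator_of_mem h1, Set.indicator_of_mem h2, sub_self, abs_zero]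
        linarith [hg0 x, hg0 (x - y)]
      · -- x - y ∈ B 1, x ∉ B 1, so x ∈ B (1+ρ)
        have hx : x ∈ B (1 + ρ) := by
          have : x = (x - y) + y := by abel
          rw [this]
          exact hadd 1 ρ one_pos hρ0 (Set.add_mem_add h1 hy)
        have : g x = c := by
          simp [hgdef, Set.indicator_of_mem hx, Set.indicator_of_notMem h2]
        rw [Set.indicator_of_mem h1, Set.indicator_of_notMem h2]
        have := hg0 (x - y)
        rw [abs_of_nonneg (by linarith [hc] : (0:ℝ) ≤ c - 0)]
        linarith [hg0 (x - y), this]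
      · -- x ∈ B 1, x - y ∉ B 1, so x - y ∈ B (1+ρ)
        have hny : -y ∈ B ρ := by
          rw [← hsymm ρ hρ0]; exact Set.neg_mem_neg.mpr hy
        have hx : x - y ∈ B (1 + ρ) := by
          have : x - y = x + (-y) := by abel
          rw [this]
          exact hadd 1 ρ one_pos hρ0 (Set.add_mem_add h2 hny)
        have hgxy : g (x - y) = c := by
          simp [hgdef, Set.indicator_of_mem hx, Set.indicator_of_notMem h1]
        rw [Set.indicator_of_notMem h1, Set.indicator_of_mem h2]
        rw [abs_of_nonpos (by linarith : (0:ℝ) - c ≤ 0)]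
        linarith [hg0 x]
      · simp only [Set.indicator_of_notMem h1, Set.indicator_of_notMem h2, sub_self, abs_zero]
        linarith [hg0 x, hg0 (x - y)]
    calc ∑ x, |muFn (B 1) (x - y) - muFn (B 1) x| ≤ ∑ x, (g x + g (x - y)) :=
          Finset.sum_le_sum fun x _ => hpt x
    _ = ∑ x, g x + ∑ x, g (x - y) := Finset.sum_add_distrib
    _ = 2 * ∑ x, g x := by
        rw [Fintype.sum_equiv (Equiv.subRight y) (fun x => g (x - y)) g (fun _ => rfl)]; ring
    _ = 2 * (c * (n₂ - n₁)) := by rw [sumg]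
    _ ≤ 2 * (c * (32 * ρ * d * n₁)) := by
        apply mul_le_mul_of_nonneg_left _ (by norm_num)
        apply mul_le_mul_of_nonneg_left _ hc
        linarith
    _ = 64 * ρ * d * (c * n₁) := by ring
    _ = 64 * ρ * d * N := by rw [hcdef, div_mul_cancel₀ _ (ne_of_gt hn1)]
  -- rewrite the difference
  have hμsum : ∑ y, μ y = N := by
    have := hμ1
    rw [gavg, ← hNdef] at this
    field_simp at this
    linarith [this]
  have hdiff : ∀ x, conv (muFn (B 1)) μ x - muFn (B 1) x
      = N⁻¹ * ∑ y, μ y * (muFn (B 1) (x - y) - muFn (B 1) x) := by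
    intro x
    have h1 : conv (muFn (B 1)) μ x = N⁻¹ * ∑ y, μ y * muFn (B 1) (x - y) := by
      rw [conv, ← hNdef]
      congr 1
      rw [Fintype.sum_equiv (Equiv.subLeft x) (fun y => muFn (B 1) y * μ (x - y))
        (fun y => μ y * muFn (B 1) (x - y)) ?_]
      intro y
      simp [Equiv.subLeft, mul_comm]
    have h2 : muFn (B 1) x = N⁻¹ * ∑ y, μ y * muFn (B 1) x := by
      rw [← Finset.sum_mul, hμsum]
      field_simp
    rw [h1]
    nth_rewrite 1 [h2]
    rw [← mul_sub, ← Finset.sum_sub_distrib]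
    congr 1
    apply Finset.sum_congr rfl
    intro y _
    ring
  -- main estimate
  rw [L1Norm, gavg, ← hNdef]
  rw [show (64:ℝ) * ρ * d = N⁻¹ * (N * (64 * ρ * d)) by field_simp]
  apply mul_le_mul_of_nonneg_left _ (by positivity)
  calc ∑ x, |conv (muFn (B 1)) μ x - muFn (B 1) x|
      ≤ ∑ x, N⁻¹ * ∑ y, μ y * |muFn (B 1) (x - y) - muFn (B 1) x| := by
        apply Finset.sum_le_sum
        intro x _
        rw [hdiff x]
        rw [abs_mul, abs_of_nonneg (by positivity : (0:ℝ) ≤ N⁻¹)]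
        apply mul_le_mul_of_nonneg_left _ (by positivity)
        calc |∑ y, μ y * (muFn (B 1) (x - y) - muFn (B 1) x)|
            ≤ ∑ y, |μ y * (muFn (B 1) (x - y) - muFn (B 1) x)| := Finset.abs_sum_le_sum_abs _ _
          _ = ∑ y, μ y * |muFn (B 1) (x - y) - muFn (B 1) x| := by
              apply Finset.sum_congr rfl
              intro y _
              rw [abs_mul, abs_of_nonneg (hμ0 y)]
    _ = N⁻¹ * ∑ y, μ y * ∑ x, |muFn (B 1) (x - y) - muFn (B 1) x| := by
        rw [← Finset.mul_sum, Finset.sum_comm]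
        congr 1
        apply Finset.sum_congr rfl
        intro y _
        rw [Finset.mul_sum]
    _ ≤ N⁻¹ * ∑ y, μ y * (64 * ρ * d * N) := by
        apply mul_le_mul_of_nonneg_left _ (by positivity)
        apply Finset.sum_le_sum
        intro y _
        by_cases hμy : μ y = 0
        · simp [hμy]
        · exact mul_le_mul_of_nonneg_left (key y (hsupp y hμy)) (hμ0 y)
    _ = N⁻¹ * ((∑ y, μ y) * (64 * ρ * d * N)) := by rw [← Finset.sum_mul]
    _ = N * (64 * ρ * d) := by
        rw [hμsum]
        field_simp
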